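/- (Summation over spatially non-resonant centers) Let N ≥ 1, α > N, a > 0, β > 0, and define Γ_β : ℤ^N → (0,∞) by Γ_β(i) = a|i|^{−α}e^{−β|i|} for i ≠ 0 and Γ_β(0) = a, with |i| the ℓ¹-norm. Let c_1,…,c_r ∈ ℤ^N (r ≥ 2) be pairwise distinct sites that are spatially non-resonant: for every i ∈ ℤ^N there are at most two indices p ≠ q with |c_p − i| = |c_q − i|. Then for every i ∈ ℤ^N, ∑_{k=1}^{r} Γ_β(i−c_k) < (2/(1−e^{−β}))·max_{1≤k≤r} Γ_β(i−c_k). -/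

import Mathlib

open scoped BigOperators

noncomputable section

/-- The ℓ¹-norm of a lattice point `i ∈ ℤ^N`, as a natural number. -/
def l1Z {N : ℕ} (i : Fin N → ℤ) : ℕ := ∑ s, (i s).natAbs

/-- The decay function `Γ_β(i) = a |i|^{-α} e^{-β|i|}` for `i ≠ 0`, `Γ_β(0) = a`. -/
noncomputable def GammaBeta (N : ℕ) (a α β : ℝ) (i : Fin N → ℤ) : ℝ :=
  if i = 0 then a else a * ((l1Z i : ℝ)) ^ (-α) * Real.exp (-β * (l1Z i : ℝ))

lemma l1Z_eq_zero_iff {N : ℕ} {i : Fin N → ℤ} : l1Z i = 0 ↔ i = 0 := by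
  constructor
  · intro h
    funext s
    simp only [l1Z, Finset.sum_eq_zero_iff, Finset.mem_univ, true_implies] at h
    have := h s
    simpa [Int.natAbs_eq_zero] using this
  · intro h; subst h; simp [l1Z]

lemma l1Z_sub_comm {N : ℕ} (x y : Fin N → ℤ) : l1Z (x - y) = l1Z (y - x) := by
  unfold l1Z
  refine Finset.sum_congr rfl fun s _ => ?_
  simp [Pi.sub_apply, ← Int.natAbs_neg (x s - y s)]

/-- The radial profile of `GammaBeta`. -/
noncomputable def gval (a α β : ℝ) (n : ℕ) : ℝ :=
  if n = 0 then a else a * (n : ℝ) ^ (-α) * Real.exp (-β * n)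

lemma GammaBeta_eq_gval (N : ℕ) (a α β : ℝ) (x : Fin N → ℤ) :
    GammaBeta N a α β x = gval a α β (l1Z x) := by
  unfold GammaBeta gval
  by_cases h : x = 0
  · have h0 : l1Z x = 0 := l1Z_eq_zero_iff.mpr h
    simp [h, h0, l1Z_eq_zero_iff.mpr rfl]
  · rw [if_neg h, if_neg (fun hz => h (l1Z_eq_zero_iff.mp hz))]

lemma gval_pos {a : ℝ} (ha : 0 < a) (α β : ℝ) (n : ℕ) : 0 < gval a α β n := by
  unfold gval
  split
  · exact ha
  · positivity

lemma gval_decay {a α β : ℝ} (ha : 0 < a) (hα : 0 < α) (hβ : 0 < β) {m n : ℕ} (h : m ≤ n) :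
    gval a α β n ≤ gval a α β m * Real.exp (-β * ((n : ℝ) - m)) := by
  rcases Nat.eq_zero_or_pos n with hn | hn
  · have hm0 : m = 0 := by omega
    subst hm0; subst hn
    simp [gval]
  rcases Nat.eq_zero_or_pos m with hm | hm
  · subst hm
    rw [gval, if_neg hn.ne', gval, if_pos rfl]
    have h1 : (n : ℝ) ^ (-α) ≤ 1 :=
      Real.rpow_le_one_of_one_le_of_nonpos (by exact_mod_cast hn) (neg_nonpos.mpr hα.le)
    have he : (0:ℝ) < Real.exp (-β * n) := Real.exp_pos _
    calc a * (n:ℝ) ^ (-α) * Real.exp (-β * n)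
        ≤ a * 1 * Real.exp (-β * n) := by
          apply mul_le_mul_of_nonneg_right (mul_le_mul_of_nonneg_left h1 ha.le) he.le
      _ = a * Real.exp (-β * ((n:ℝ) - (0:ℕ))) := by norm_num
  · rw [gval, if_neg hn.ne', gval, if_neg hm.ne']
    have h1 : (n : ℝ) ^ (-α) ≤ (m : ℝ) ^ (-α) :=
      Real.rpow_le_rpow_of_nonpos (by exact_mod_cast hm) (by exact_mod_cast h)
        (neg_nonpos.mpr hα.le)
    have h2 : Real.exp (-β * n) = Real.exp (-β * m) * Real.exp (-β * ((n:ℝ) - m)) := by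
      rw [← Real.exp_add]; ring_nf
    rw [h2]
    have hm0 : (0:ℝ) < (m:ℝ) ^ (-α) := Real.rpow_pos_of_pos (by exact_mod_cast hm) _
    have he1 : (0:ℝ) < Real.exp (-β * m) := Real.exp_pos _
    have he2 : (0:ℝ) < Real.exp (-β * ((n:ℝ) - m)) := Real.exp_pos _
    calc a * (n:ℝ) ^ (-α) * (Real.exp (-β * m) * Real.exp (-β * ((n:ℝ) - m)))
        ≤ a * (m:ℝ) ^ (-α) * (Real.exp (-β * m) * Real.exp (-β * ((n:ℝ) - m))) := by
          apply mul_le_mul_of_nonneg_right (mul_le_mul_of_nonneg_left h1 ha.le)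
          positivity
      _ = a * (m:ℝ) ^ (-α) * Real.exp (-β * m) * Real.exp (-β * ((n:ℝ) - m)) := by ring

set_option maxHeartbeats 1000000 in
theorem statement14 {N : ℕ} (hN : 1 ≤ N) (a α β : ℝ)
    (hα : (N : ℝ) < α) (ha : 0 < a) (hβ : 0 < β)
    (r : ℕ) (hr : 2 ≤ r) (c : Fin r → (Fin N → ℤ))
    (hinj : Function.Injective c)
    (hnr : ∀ i : Fin N → ℤ, ∀ p q s : Fin r, p ≠ q → q ≠ s → p ≠ s →
      ¬ (l1Z (c p - i) = l1Z (c q - i) ∧ l1Z (c q - i) = l1Z (c s - i))) :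
    ∀ i : Fin N → ℤ,
      (∑ k : Fin r, GammaBeta N a α β (i - c k)) <
        (2 / (1 - Real.exp (-β))) *
          Finset.univ.sup' (Finset.univ_nonempty_iff.mpr ⟨⟨0, by omega⟩⟩)
            (fun k : Fin r => GammaBeta N a α β (i - c k)) := by
  intro i
  have hα0 : 0 < α := lt_of_le_of_lt (by exact_mod_cast Nat.zero_le N) hα
  have hne : (Finset.univ : Finset (Fin r)).Nonempty :=
    Finset.univ_nonempty_iff.mpr ⟨⟨0, by omega⟩⟩
  set d : Fin r → ℕ := fun k => l1Z (i - c k) with hd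
  have hG : ∀ k, GammaBeta N a α β (i - c k) = gval a α β (d k) :=
    fun k => GammaBeta_eq_gval N a α β (i - c k)
  set M := Finset.univ.sup' hne (fun k : Fin r => GammaBeta N a α β (i - c k)) with hM
  -- fibers of d have at most two elements
  have hfib : ∀ nval : ℕ, (Finset.univ.filter (fun k => d k = nval)).card ≤ 2 := by
    intro nval
    by_contra hcon
    push_neg at hcon
    obtain ⟨p, q, s, hp, hq, hs, hpq, hps, hqs⟩ := Finset.two_lt_card_iff.mp hcon
    simp only [Finset.mem_filter, Finset.mem_univ, true_and] at hp hq hs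
    refine hnr i p q s hpq hqs hps ⟨?_, ?_⟩
    · rw [l1Z_sub_comm (c p) i, l1Z_sub_comm (c q) i]
      show d p = d q
      rw [hp, hq]
    · rw [l1Z_sub_comm (c q) i, l1Z_sub_comm (c s) i]
      show d q = d s
      rw [hq, hs]
  set S := Finset.univ.image d with hS
  have hSne : S.Nonempty := hne.image d
  set m := S.min' hSne with hm
  set T := S.max' hSne with hT
  obtain ⟨k0, _, hk0⟩ := Finset.mem_image.mp (S.min'_mem hSne)
  have hMg : gval a α β m ≤ M := by
    rw [hm, hM, ← hk0, ← hG k0]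
    exact Finset.le_sup' (fun k : Fin r => GammaBeta N a α β (i - c k)) (Finset.mem_univ k0)
  have hMpos : 0 < M := lt_of_lt_of_le (gval_pos ha α β m) hMg
  set x := Real.exp (-β) with hx
  have hx0 : 0 < x := Real.exp_pos _
  have hx1 : x < 1 := Real.exp_lt_one_iff.mpr (by linarith)
  have h1x : 0 < 1 - x := by linarith
  -- pointwise bound: gval n ≤ M * x^(n-m) for n ∈ S
  have hpoint : ∀ n ∈ S, gval a α β n ≤ M * x ^ (n - m) := by
    intro n hn
    have hmn : m ≤ n := S.min'_le n hn
    have h1 := gval_decay ha hα0 hβ hmn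
    have hcast : ((n : ℝ) - m) = ((n - m : ℕ) : ℝ) := by
      rw [Nat.cast_sub hmn]
    have hexp : Real.exp (-β * ((n : ℝ) - m)) = x ^ (n - m) := by
      rw [hcast, mul_comm, ← Real.exp_nat_mul]
    calc gval a α β n ≤ gval a α β m * Real.exp (-β * ((n:ℝ) - m)) := h1
      _ ≤ M * Real.exp (-β * ((n:ℝ) - m)) :=
          mul_le_mul_of_nonneg_right hMg (Real.exp_pos _).le
      _ = M * x ^ (n - m) := by rw [hexp]
  -- the geometric sum bound
  have hgeom : ∑ j ∈ Finset.range (T + 1), x ^ j < (1 - x)⁻¹ := by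
    rw [geom_sum_eq (ne_of_lt hx1)]
    have hxK : 0 < x ^ (T + 1) := pow_pos hx0 _
    rw [div_lt_iff_of_neg (by linarith : x - 1 < 0)]
    have hfe : (1 - x)⁻¹ * (x - 1) = -1 := by field_simp; ring
    linarith
  -- sum over distinct shifted distances is at most the geometric sum
  have himg : ∑ n ∈ S, x ^ (n - m) ≤ ∑ j ∈ Finset.range (T + 1), x ^ j := by
    have hinjS : ∀ n ∈ S, ∀ n' ∈ S, n - m = n' - m → n = n' := by
      intro n hn n' hn' h
      have := S.min'_le n hn
      have := S.min'_le n' hn'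
      omega
    calc ∑ n ∈ S, x ^ (n - m)
        = ∑ j ∈ S.image (fun n => n - m), x ^ j :=
          (Finset.sum_image (g := fun n => n - m) (f := fun j => x ^ j) hinjS).symm
      _ ≤ ∑ j ∈ Finset.range (T + 1), x ^ j := by
          apply Finset.sum_le_sum_of_subset_of_nonneg
          · intro j hj
            obtain ⟨n, hn, rfl⟩ := Finset.mem_image.mp hj
            have : n ≤ T := S.le_max' n hn
            exact Finset.mem_range.mpr (by omega)
          · intro j _ _
            positivity
  have key : (∑ k : Fin r, GammaBeta N a α β (i - c k)) ≤
      2 * M * ∑ j ∈ Finset.range (T + 1), x ^ j := by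
    calc (∑ k : Fin r, GammaBeta N a α β (i - c k))
        = ∑ k : Fin r, gval a α β (d k) := Finset.sum_congr rfl fun k _ => hG k
      _ = ∑ n ∈ S, (Finset.univ.filter fun k => d k = n).card • gval a α β n :=
          Finset.sum_comp (gval a α β) d
      _ ≤ ∑ n ∈ S, 2 * (M * x ^ (n - m)) := by
          apply Finset.sum_le_sum
          intro n hn
          rw [nsmul_eq_mul]
          have h1 : gval a α β n ≤ M * x ^ (n - m) := hpoint n hn
          have h2 : ((Finset.univ.filter fun k => d k = n).card : ℝ) ≤ 2 := by
            exact_mod_cast hfib n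
          have h3 : 0 ≤ gval a α β n := (gval_pos ha α β n).le
          nlinarith
      _ = 2 * M * ∑ n ∈ S, x ^ (n - m) := by
          rw [Finset.mul_sum]
          exact Finset.sum_congr rfl fun n _ => by ring
      _ ≤ 2 * M * ∑ j ∈ Finset.range (T + 1), x ^ j := by
          apply mul_le_mul_of_nonneg_left himg (by positivity)
  calc (∑ k : Fin r, GammaBeta N a α β (i - c k))
      ≤ 2 * M * ∑ j ∈ Finset.range (T + 1), x ^ j := key
    _ < 2 * M * (1 - x)⁻¹ := by
        apply mul_lt_mul_of_pos_left hgeom (by positivity)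
    _ = (2 / (1 - x)) * M := by rw [div_eq_mul_inv]; ring
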